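/- arXiv:1112.0955 — 2 statements merged into one kernel-verified Lean document; each statement's English description precedes it below -/
import Mathlib

section
/- Let A, B be k-dimensional linear subspaces of ℝ^d with A ∩ B = {0}, where k ≥ 1. Let a₁ ∈ A and b₁ ∈ B be unit vectors minimizing ‖a−b‖ over all unit vectors a ∈ A, b ∈ B. Then for every a ∈ A with a ⟂ a₁ and every b ∈ B with b ⟂ b₁, one has ⟨a, b₁⟩ = 0 and ⟨b, a₁⟩ = 0. -/
open scoped RealInnerProductSpace

private lemma aux_side {d : ℕ} (A : Submodule ℝ (EuclideanSpace ℝ (Fin d)))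
    (a₁ b₁ : EuclideanSpace ℝ (Fin d)) (ha₁ : a₁ ∈ A) (ha₁n : ‖a₁‖ = 1)
    (hmax : ∀ a ∈ A, ‖a‖ = 1 → ⟪a, b₁⟫ ≤ ⟪a₁, b₁⟫) :
    ∀ a ∈ A, ⟪a, a₁⟫ = 0 → ⟪a, b₁⟫ = 0 := by
  set c : ℝ := ⟪a₁, b₁⟫ with hc
  have hc0 : 0 ≤ c := by
    have := hmax (-a₁) (A.neg_mem ha₁) (by simp [ha₁n])
    simp only [inner_neg_left] at this
    linarith
  intro a haA hao
  by_cases ha0 : a = 0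
  · simp [ha0]
  have hna : ‖a‖ ≠ 0 := norm_ne_zero_iff.mpr ha0
  set u : EuclideanSpace ℝ (Fin d) := ‖a‖⁻¹ • a with hu
  have huA : u ∈ A := A.smul_mem _ haA
  have hun : ‖u‖ = 1 := by
    rw [hu, norm_smul, norm_inv, norm_norm, inv_mul_cancel₀ hna]
  have huo : ⟪u, a₁⟫ = 0 := by
    rw [hu, real_inner_smul_left, hao, mul_zero]
  set s : ℝ := ⟪u, b₁⟫ with hs
  suffices hsz : s = 0 by
    have : ⟪a, b₁⟫ = ‖a‖ * s := by
      rw [hs, hu, real_inner_smul_left]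
      field_simp
    rw [this, hsz, mul_zero]
  set v : EuclideanSpace ℝ (Fin d) := c • a₁ + s • u with hv
  have hvb : ⟪v, b₁⟫ = c ^ 2 + s ^ 2 := by
    rw [hv]
    simp only [inner_add_left, real_inner_smul_left, ← hc, ← hs]
    ring
  have hvn : ‖v‖ ^ 2 = c ^ 2 + s ^ 2 := by
    have h1 : ⟪a₁, a₁⟫ = (1:ℝ) := by
      rw [real_inner_self_eq_norm_sq, ha₁n]; norm_num
    have h2 : ⟪u, u⟫ = (1:ℝ) := by
      rw [real_inner_self_eq_norm_sq, hun]; norm_num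
    have h3 : ⟪a₁, u⟫ = (0:ℝ) := by rw [real_inner_comm u a₁]; exact huo
    rw [← real_inner_self_eq_norm_sq, hv]
    simp only [inner_add_left, inner_add_right, real_inner_smul_left, real_inner_smul_right,
      h1, h2, h3, huo]
    ring
  by_cases hvz : v = 0
  · have : c ^ 2 + s ^ 2 = 0 := by rw [← hvb, hvz, inner_zero_left]
    nlinarith
  have hnv : 0 < ‖v‖ := norm_pos_iff.mpr hvz
  have hwA : ‖v‖⁻¹ • v ∈ A := A.smul_mem _ (A.add_mem (A.smul_mem _ ha₁) (A.smul_mem _ huA))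
  have hwn : ‖(‖v‖⁻¹ • v)‖ = 1 := by
    rw [norm_smul, norm_inv, norm_norm, inv_mul_cancel₀ hnv.ne']
  have hle := hmax _ hwA hwn
  rw [real_inner_smul_left, hvb] at hle
  have h1 : c ^ 2 + s ^ 2 ≤ ‖v‖ * c := by
    have h2 := mul_le_mul_of_nonneg_left hle hnv.le
    rwa [← mul_assoc, mul_inv_cancel₀ hnv.ne', one_mul] at h2
  nlinarith [sq_nonneg s, sq_nonneg (‖v‖ - c), hvn, h1]

/-- Let `A, B` be `k`-dimensional subspaces of `ℝ^d` with `A ∩ B = {0}`, `k ≥ 1`.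
If `a₁ ∈ A`, `b₁ ∈ B` are unit vectors minimizing `‖a − b‖` over all unit vectors
`a ∈ A`, `b ∈ B`, then every `a ∈ A` orthogonal to `a₁` satisfies `⟨a, b₁⟩ = 0` and
every `b ∈ B` orthogonal to `b₁` satisfies `⟨b, a₁⟩ = 0`. -/
theorem minimizing_pair_orthogonality (d k : ℕ) (hk : 1 ≤ k)
    (A B : Submodule ℝ (EuclideanSpace ℝ (Fin d))) (hAB : A ⊓ B = ⊥)
    (hA : Module.finrank ℝ A = k) (hB : Module.finrank ℝ B = k)
    (a₁ b₁ : EuclideanSpace ℝ (Fin d)) (ha₁ : a₁ ∈ A) (hb₁ : b₁ ∈ B)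
    (ha₁n : ‖a₁‖ = 1) (hb₁n : ‖b₁‖ = 1)
    (hmin : ∀ a ∈ A, ∀ b ∈ B, ‖a‖ = 1 → ‖b‖ = 1 → ‖a₁ - b₁‖ ≤ ‖a - b‖) :
    (∀ a ∈ A, ⟪a, a₁⟫ = 0 → ⟪a, b₁⟫ = 0) ∧
    (∀ b ∈ B, ⟪b, b₁⟫ = 0 → ⟪b, a₁⟫ = 0) := by
  have hmax : ∀ a ∈ A, ∀ b ∈ B, ‖a‖ = 1 → ‖b‖ = 1 → ⟪a, b⟫ ≤ ⟪a₁, b₁⟫ := by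
    intro a haA b hbB han hbn
    have h := hmin a haA b hbB han hbn
    have h2 : ‖a₁ - b₁‖ ^ 2 ≤ ‖a - b‖ ^ 2 := by
      apply pow_le_pow_left₀ (norm_nonneg _) h
    rw [norm_sub_sq_real, norm_sub_sq_real, ha₁n, hb₁n, han, hbn] at h2
    linarith
  constructor
  · exact aux_side A a₁ b₁ ha₁ ha₁n (fun a haA han => hmax a haA b₁ hb₁ han hb₁n)
  · refine aux_side B b₁ a₁ hb₁ hb₁n (fun b hbB hbn => ?_)
    have h := hmax a₁ ha₁ b hbB ha₁n hbn
    rwa [real_inner_comm b a₁, real_inner_comm b₁ a₁] at h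
end

section
/- Let a₁, …, a_d be an orthonormal basis of ℝ^d and b₁, …, b_s an orthonormal system in ℝ^d, with r + s = d and r, s ≥ 0. Then ‖a₁ ∧ … ∧ a_r ∧ b₁ ∧ … ∧ b_s‖² = ⟨a_{r+1} ∧ … ∧ a_d, b₁ ∧ … ∧ b_s⟩². -/
open Matrix


open scoped RealInnerProductSpace

/-- The Gram-determinant inner product of two families of vectors:
`⟨u₁∧…∧u_k, v₁∧…∧v_k⟩ = det((⟨u_i, v_j⟩))`.  For `u = v` this is the squared norm
`‖u₁∧…∧u_k‖²` of the corresponding simple multivector. -/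
noncomputable def gramInner {d : ℕ} {ι : Type*} [Fintype ι] [DecidableEq ι]
    (u v : ι → EuclideanSpace ℝ (Fin d)) : ℝ :=
  Matrix.det (Matrix.of fun i j => ⟪u i, v j⟫)

/-- Let `a₁,…,a_d` be an orthonormal basis of `ℝ^d` and `b₁,…,b_s` an orthonormal system,
`r + s = d`.  Then `‖a₁∧…∧a_r∧b₁∧…∧b_s‖² = ⟨a_{r+1}∧…∧a_d, b₁∧…∧b_s⟩²`. -/
theorem wedge_normSq_eq_inner_sq (d r s : ℕ) (hrs : r + s = d)
    (a : Fin d → EuclideanSpace ℝ (Fin d)) (ha : Orthonormal ℝ a)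
    (haspan : Submodule.span ℝ (Set.range a) = ⊤)
    (b : Fin s → EuclideanSpace ℝ (Fin d)) (hb : Orthonormal ℝ b) :
    gramInner (Sum.elim (fun i : Fin r => a (Fin.castLE (by omega) i)) b)
        (Sum.elim (fun i : Fin r => a (Fin.castLE (by omega) i)) b)
      = (gramInner (fun j : Fin s => a ⟨r + (j : ℕ), by omega⟩) b) ^ 2 := by
  classical
  set B : Matrix (Fin r) (Fin s) ℝ := Matrix.of fun i j => ⟪a (Fin.castLE (by omega) i), b j⟫ with hB
  set D : Matrix (Fin s) (Fin s) ℝ := Matrix.of fun i j => ⟪a ⟨r + (i : ℕ), by omega⟩, b j⟫ with hD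
  have hai : ∀ i j : Fin d, ⟪a i, a j⟫ = if i = j then (1:ℝ) else 0 := orthonormal_iff_ite.mp ha
  have hbi : ∀ i j : Fin s, ⟪b i, b j⟫ = if i = j then (1:ℝ) else 0 := orthonormal_iff_ite.mp hb
  -- the big Gram matrix as block matrix
  have h1 : (Matrix.of fun i j => ⟪(Sum.elim (fun i : Fin r => a (Fin.castLE (by omega) i)) b) i,
        (Sum.elim (fun i : Fin r => a (Fin.castLE (by omega) i)) b) j⟫)
      = Matrix.fromBlocks 1 B Bᵀ 1 := by
    ext i j
    cases i with
    | inl i => cases j with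
      | inl j =>
        simp only [Matrix.of_apply, Sum.elim_inl, Matrix.fromBlocks_apply₁₁, Matrix.one_apply, hai]
        simp [Fin.castLE_inj]
      | inr j => simp [Matrix.fromBlocks, hB]
    | inr i => cases j with
      | inl j =>
        simp only [Matrix.of_apply, Sum.elim_inr, Sum.elim_inl, Matrix.fromBlocks_apply₂₁,
          Matrix.transpose_apply, hB, Matrix.of_apply]
        exact real_inner_comm _ _
      | inr j =>
        simp only [Matrix.of_apply, Sum.elim_inr, Matrix.fromBlocks_apply₂₂, Matrix.one_apply, hbi]
  have hbasis : ∀ j k : Fin s, ⟪b j, b k⟫ = ∑ i : Fin d, ⟪a i, b j⟫ * ⟪a i, b k⟫ := by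
    intro j k
    let oa : OrthonormalBasis (Fin d) ℝ (EuclideanSpace ℝ (Fin d)) :=
      OrthonormalBasis.mk ha (ge_of_eq haspan)
    have := oa.sum_inner_mul_inner (b j) (b k)
    have hoa : ∀ i, oa i = a i := fun i => OrthonormalBasis.coe_mk ha _ ▸ rfl
    calc ⟪b j, b k⟫ = ∑ i, ⟪b j, oa i⟫ * ⟪oa i, b k⟫ := (oa.sum_inner_mul_inner (b j) (b k)).symm
    _ = ∑ i : Fin d, ⟪a i, b j⟫ * ⟪a i, b k⟫ := by
        refine Finset.sum_congr rfl fun i _ => ?_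
        rw [hoa, real_inner_comm (b j)]
  have h2 : Bᵀ * B + Dᵀ * D = 1 := by
    ext j k
    have := hbasis j k
    rw [hbi] at this
    simp only [Matrix.add_apply, Matrix.mul_apply, Matrix.transpose_apply, Matrix.one_apply,
      hB, hD, Matrix.of_apply]
    rw [this]
    rw [← Fintype.sum_equiv ((finSumFinEquiv (m := r) (n := s)).trans (finCongr hrs))
      (fun i : Fin r ⊕ Fin s => ⟪a (((finSumFinEquiv).trans (finCongr hrs)) i), b j⟫
        * ⟪a (((finSumFinEquiv).trans (finCongr hrs)) i), b k⟫)
      (fun i : Fin d => ⟪a i, b j⟫ * ⟪a i, b k⟫) (fun i => rfl)]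
    rw [Fintype.sum_sum_type]
    congr 1
  have h3 : (1 : Matrix (Fin s) (Fin s) ℝ) - Bᵀ * B = Dᵀ * D := by
    rw [← h2, add_sub_cancel_left]
  unfold gramInner
  rw [h1, Matrix.det_fromBlocks_one₁₁, h3, Matrix.det_mul, Matrix.det_transpose, sq]
end
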